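/- Let S be a good set with A₁ ∈ S and B₁ ∈ S and such that S contains at least two elements of B. Fix an enumeration of the elements of S as the rows of a 2k × 2k real matrix M_B, and let M_C be the matrix obtained from M_B by replacing the row equal to B₁ with C₁ (all other rows unchanged). Then det(M_B)·det(M_C) < 0; in particular B₁ and C₁ lie strictly on opposite sides of the affine hyperplane spanned by S \ {B₁}. -/

import Mathlib

noncomputable section

/-- The ambient space `ℝ^{2k}`, written as pairs `(x, y)` with `x, y ∈ ℝ^k`. -/
abbrev V (k : ℕ) := (Fin k ⊕ Fin k) → ℝ

/-- `A_j = (e_j, 0)`. -/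
def vA (k : ℕ) (j : Fin k) : V k
  | .inl i => if i = j then 1 else 0
  | .inr _ => 0

/-- `B_j = (1/(2n)) · (2·𝟙 − e_j, 2·𝟙 − e_j)` with `n = 2k − 1`. -/
def vB (k : ℕ) (j : Fin k) : V k
  | .inl i => (2 - if i = j then 1 else 0) / (2 * (2 * (k : ℝ) - 1))
  | .inr i => (2 - if i = j then 1 else 0) / (2 * (2 * (k : ℝ) - 1))

/-- `C_j = (0, e_j)`. -/
def vC (k : ℕ) (j : Fin k) : V k
  | .inl _ => 0
  | .inr i => if i = j then 1 else 0

def setA (k : ℕ) : Set (V k) := Set.range (vA k)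
def setB (k : ℕ) : Set (V k) := Set.range (vB k)
def setC (k : ℕ) : Set (V k) := Set.range (vC k)
def setX (k : ℕ) : Set (V k) := setA k ∪ setB k ∪ setC k

/-- A subset `S ⊆ X` is good if it has exactly `2k` elements, contains no full
triple `{A_j, B_j, C_j}`, and `S ≠ A ∪ C`. -/
def IsGood (k : ℕ) (S : Set (V k)) : Prop :=
  S ⊆ setX k ∧ S.ncard = 2 * k ∧
  (∀ j : Fin k, ¬ (({vA k j, vB k j, vC k j} : Set (V k)) ⊆ S)) ∧
  S ≠ setA k ∪ setC k

def Delta0 (k : ℕ) : Set (V k) := convexHull ℝ (setA k ∪ setC k)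
def Delta1 (k : ℕ) : Set (V k) := convexHull ℝ (setA k ∪ setB k)
def Delta2 (k : ℕ) : Set (V k) := convexHull ℝ (setB k ∪ setC k)

/-- The modular block `Ω = closure(Δ₀ \ (Δ₁ ∪ Δ₂))`. -/
def OmegaB (k : ℕ) : Set (V k) := closure (Delta0 k \ (Delta1 k ∪ Delta2 k))

open scoped Classical
open Finset

section helpers

variable {k : ℕ}

lemma Dpos (hk1 : 1 ≤ k) : (0:ℝ) < 2 * (2 * (k : ℝ) - 1) := by
  have : (1:ℝ) ≤ (k:ℝ) := by exact_mod_cast hk1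
  nlinarith

lemma vB_apply (j : Fin k) (x : Fin k ⊕ Fin k) :
    vB k j x = (2 - if Sum.elim id id x = j then 1 else 0) / (2 * (2 * (k : ℝ) - 1)) := by
  cases x <;> rfl

lemma vA_add_vC_apply (j : Fin k) (x : Fin k ⊕ Fin k) :
    vA k j x + vC k j x = if Sum.elim id id x = j then 1 else 0 := by
  cases x with
  | inl i => simp [vA, vC]; exact if_congr Iff.rfl rfl rfl
  | inr i => simp [vA, vC]; exact if_congr Iff.rfl rfl rfl

lemma vA_ne_vB (hk1 : 1 ≤ k) (j j' : Fin k) : vA k j ≠ vB k j' := by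
  intro h
  have h2 := congrFun h (Sum.inr j')
  have hD := Dpos (k := k) hk1
  simp [vA, vB] at h2
  rw [eq_comm, div_eq_zero_iff] at h2
  rcases h2 with h2 | h2 <;> linarith

lemma vC_ne_vB (hk1 : 1 ≤ k) (j j' : Fin k) : vC k j ≠ vB k j' := by
  intro h
  have h2 := congrFun h (Sum.inl j')
  have hD := Dpos (k := k) hk1
  simp [vC, vB] at h2
  rw [eq_comm, div_eq_zero_iff] at h2
  rcases h2 with h2 | h2 <;> linarith

lemma vA_ne_vC (j j' : Fin k) : vA k j ≠ vC k j' := by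
  intro h
  have h2 := congrFun h (Sum.inl j)
  simp [vA, vC] at h2

lemma vB_ne_vC (hk1 : 1 ≤ k) (j j' : Fin k) : vB k j ≠ vC k j' :=
  fun h => vC_ne_vB hk1 j' j h.symm

lemma vA_injective : Function.Injective (vA k) := by
  intro j j' h
  have h2 := congrFun h (Sum.inl j)
  simp [vA] at h2
  by_contra hne
  exact hne h2

lemma vC_injective : Function.Injective (vC k) := by
  intro j j' h
  have h2 := congrFun h (Sum.inr j)
  simp [vC] at h2
  by_contra hne
  exact hne h2

lemma vB_injective (hk1 : 1 ≤ k) : Function.Injective (vB k) := by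
  intro j j' h
  have hD := Dpos (k := k) hk1
  have h2 := congrFun h (Sum.inl j)
  simp [vB] at h2
  rw [div_eq_div_iff (by linarith) (by linarith)] at h2
  by_contra hne
  rw [if_neg hne] at h2
  nlinarith

/-- The coefficient function for expanding `C_z` in the rows of the matrix. -/
def lamF (k : ℕ) (S : Set (V k)) (z : Fin k) (dd DD : ℝ) (v : V k) : ℝ :=
  (if ∃ j, v = vB k j then 2 * DD / dd else 0)
  - (if v = vB k z then DD else 0)
  + (if ∃ j, (v = vA k j ∨ v = vC k j) ∧ vB k j ∉ S then -(2 / dd) else 0)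
  - (if v = vA k z then 1 else 0)

lemma lamF_B (hk1 : 1 ≤ k) (S : Set (V k)) (z : Fin k) (dd DD : ℝ) (j : Fin k) :
    lamF k S z dd DD (vB k j) = 2 * DD / dd - (if j = z then DD else 0) := by
  unfold lamF
  have hc1 : ∃ j', vB k j = vB k j' := ⟨j, rfl⟩
  have hc3 : ¬ ∃ j', ((vB k j = vA k j' ∨ vB k j = vC k j') ∧ vB k j' ∉ S) := by
    rintro ⟨j', hor, -⟩
    rcases hor with h | h
    · exact vA_ne_vB hk1 j' j h.symm
    · exact vC_ne_vB hk1 j' j h.symm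
  have hc4 : ¬ (vB k j = vA k z) := fun h => vA_ne_vB hk1 z j h.symm
  have hc2 : (vB k j = vB k z) ↔ j = z := ⟨fun h => vB_injective hk1 h, fun h => by rw [h]⟩
  rw [if_pos hc1, if_neg hc3, if_neg hc4]
  by_cases hjz : j = z
  · rw [if_pos (hc2.mpr hjz), if_pos hjz]; ring
  · rw [if_neg (fun h => hjz (hc2.mp h)), if_neg hjz]; ring

lemma lamF_A (hk1 : 1 ≤ k) (S : Set (V k)) (z : Fin k) (dd DD : ℝ) (j : Fin k) :
    lamF k S z dd DD (vA k j)
      = (if vB k j ∉ S then -(2 / dd) else 0) - (if j = z then 1 else 0) := by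
  unfold lamF
  have hc1 : ¬ ∃ j', vA k j = vB k j' := by rintro ⟨j', h⟩; exact vA_ne_vB hk1 j j' h
  have hc2 : ¬ (vA k j = vB k z) := vA_ne_vB hk1 j z
  have hiff : (∃ j', ((vA k j = vA k j' ∨ vA k j = vC k j') ∧ vB k j' ∉ S)) ↔ vB k j ∉ S := by
    constructor
    · rintro ⟨j', hor, hb⟩
      rcases hor with h | h
      · rwa [← vA_injective h] at hb
      · exact absurd h (vA_ne_vC j j')
    · intro hb; exact ⟨j, Or.inl rfl, hb⟩
  have h4 : (vA k j = vA k z) ↔ j = z :=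
    ⟨fun h => vA_injective h, fun h => by rw [h]⟩
  rw [if_neg hc1, if_neg hc2]
  by_cases hb : vB k j ∉ S
  · rw [if_pos (hiff.mpr hb), if_pos hb]
    by_cases hjz : j = z
    · rw [if_pos (h4.mpr hjz), if_pos hjz]; ring
    · rw [if_neg (fun h => hjz (h4.mp h)), if_neg hjz]; ring
  · rw [if_neg (fun h => hb (hiff.mp h)), if_neg hb]
    by_cases hjz : j = z
    · rw [if_pos (h4.mpr hjz), if_pos hjz]; ring
    · rw [if_neg (fun h => hjz (h4.mp h)), if_neg hjz]; ring

lemma lamF_C (hk1 : 1 ≤ k) (S : Set (V k)) (z : Fin k) (dd DD : ℝ) (j : Fin k) :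
    lamF k S z dd DD (vC k j) = (if vB k j ∉ S then -(2 / dd) else 0) := by
  unfold lamF
  have hc1 : ¬ ∃ j', vC k j = vB k j' := by rintro ⟨j', h⟩; exact vC_ne_vB hk1 j j' h
  have hc2 : ¬ (vC k j = vB k z) := vC_ne_vB hk1 j z
  have hc4 : ¬ (vC k j = vA k z) := fun h => vA_ne_vC z j h.symm
  have hiff : (∃ j', ((vC k j = vA k j' ∨ vC k j = vC k j') ∧ vB k j' ∉ S)) ↔ vB k j ∉ S := by
    constructor
    · rintro ⟨j', hor, hb⟩
      rcases hor with h | h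
      · exact absurd h.symm (vA_ne_vC j' j)
      · rwa [← vC_injective h] at hb
    · intro hb; exact ⟨j, Or.inr rfl, hb⟩
  rw [if_neg hc1, if_neg hc2, if_neg hc4]
  by_cases hb : vB k j ∉ S
  · rw [if_pos (hiff.mpr hb), if_pos hb]; ring
  · rw [if_neg (fun h => hb (hiff.mp h)), if_neg hb]; ring

end helpers

set_option maxHeartbeats 2000000 in
/-- Let `S` be good with `A₁, B₁ ∈ S` and containing at least two elements of `B`.
Enumerate the elements of `S` as the rows of a `2k × 2k` matrix `M_B`; let `M_C` be
obtained by replacing the row equal to `B₁` with `C₁`.  Then `det(M_B)·det(M_C) < 0`,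
i.e. `B₁` and `C₁` lie strictly on opposite sides of the affine hyperplane spanned by
`S \ {B₁}`. -/
theorem stmt_7 (k : ℕ) (hk : 2 ≤ k) (S : Set (V k)) (hS : IsGood k S)
    (hA1 : vA k ⟨0, by omega⟩ ∈ S) (hB1 : vB k ⟨0, by omega⟩ ∈ S)
    (htwo : 2 ≤ (S ∩ setB k).ncard)
    (r : (Fin k ⊕ Fin k) → V k) (hr : Function.Injective r)
    (hrange : Set.range r = S)
    (i₀ : Fin k ⊕ Fin k) (hi₀ : r i₀ = vB k ⟨0, by omega⟩) :
    (Matrix.of fun i j => r i j).det *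
      (Matrix.of fun i j => Function.update r i₀ (vC k ⟨0, by omega⟩) i j).det < 0 := by
  classical
  obtain ⟨hSX, hcard, htriple, -⟩ := hS
  have hk1 : 1 ≤ k := by omega
  set z : Fin k := ⟨0, by omega⟩ with hzdef
  have hA1' : vA k z ∈ S := hA1
  have hB1' : vB k z ∈ S := hB1
  have hi₀' : r i₀ = vB k z := hi₀
  set D : ℝ := 2 * (2 * (k:ℝ) - 1) with hDdef
  have hD : 0 < D := Dpos hk1
  have hDne : D ≠ 0 := ne_of_gt hD
  -- the finite set of elements of S
  have hSfin : S.Finite := hrange ▸ Set.finite_range r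
  set F : Finset (V k) := hSfin.toFinset with hFdef
  have hmemF : ∀ v, v ∈ F ↔ v ∈ S := fun v => Set.Finite.mem_toFinset _
  have hFcard : F.card = 2 * k := by
    rw [hFdef, ← Set.ncard_eq_toFinset_card S hSfin]; exact hcard
  set tri : Fin k → Finset (V k) := fun j => {vA k j, vB k j, vC k j} with htridef
  have htri_mem : ∀ j v, v ∈ tri j ↔ (v = vA k j ∨ v = vB k j ∨ v = vC k j) := by
    intro j v; simp [htridef]
  have htri_card : ∀ j, (tri j).card = 3 := by
    intro j
    exact Finset.card_eq_three.mpr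
      ⟨_, _, _, vA_ne_vB hk1 j j, vA_ne_vC j j, vB_ne_vC hk1 j j, rfl⟩
  have htri_disj : ∀ j j' : Fin k, j ≠ j' → Disjoint (tri j) (tri j') := by
    intro j j' hne
    rw [Finset.disjoint_left]
    intro v hv hv'
    rw [htri_mem] at hv hv'
    rcases hv with h | h | h <;> rcases hv' with h' | h' | h' <;> rw [h] at h'
    · exact hne (vA_injective h')
    · exact vA_ne_vB hk1 j j' h'
    · exact vA_ne_vC j j' h'
    · exact vA_ne_vB hk1 j' j h'.symm
    · exact hne (vB_injective hk1 h')
    · exact vB_ne_vC hk1 j j' h'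
    · exact vA_ne_vC j' j h'.symm
    · exact vB_ne_vC hk1 j' j h'.symm
    · exact hne (vC_injective h')
  set G : Fin k → Finset (V k) := fun j => F ∩ tri j with hGdef
  have hF_eq : F = Finset.univ.biUnion G := by
    ext v
    simp only [Finset.mem_biUnion, hGdef, Finset.mem_inter, Finset.mem_univ, true_and]
    constructor
    · intro hv
      have hvS : v ∈ S := (hmemF v).mp hv
      rcases hSX hvS with (⟨j, rfl⟩ | ⟨j, rfl⟩) | ⟨j, rfl⟩
      · exact ⟨j, hv, by rw [htri_mem]; tauto⟩
      · exact ⟨j, hv, by rw [htri_mem]; tauto⟩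
      · exact ⟨j, hv, by rw [htri_mem]; tauto⟩
    · rintro ⟨j, hv, -⟩; exact hv
  have hGsub : ∀ j, G j ⊆ tri j := fun j => Finset.inter_subset_right
  have hGle : ∀ j, (G j).card ≤ 2 := by
    intro j
    by_contra hgt
    push_neg at hgt
    have h3 : (G j).card ≤ 3 := (htri_card j) ▸ Finset.card_le_card (hGsub j)
    have heq : G j = tri j :=
      Finset.eq_of_subset_of_card_le (hGsub j) (by rw [htri_card]; omega)
    apply htriple j
    intro v hv
    simp only [Set.mem_insert_iff, Set.mem_singleton_iff] at hv
    have hvtri : v ∈ tri j := by rw [htri_mem]; exact hv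
    rw [← heq] at hvtri
    exact (hmemF v).mp (Finset.mem_inter.mp hvtri).1
  have hGsum : ∑ j, (G j).card = 2 * k := by
    rw [← Finset.card_biUnion, ← hF_eq, hFcard]
    intro j _ j' _ hne
    exact (htri_disj j j' hne).mono Finset.inter_subset_right Finset.inter_subset_right
  have hG2 : ∀ j, (G j).card = 2 := by
    intro j
    by_contra hne2
    have hlt : (G j).card < 2 := lt_of_le_of_ne (hGle j) hne2
    have hstrict := Finset.sum_lt_sum (fun i (_ : i ∈ Finset.univ) => hGle i)
      ⟨j, Finset.mem_univ j, hlt⟩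
    rw [hGsum] at hstrict
    simp only [Finset.sum_const, Finset.card_univ, Fintype.card_fin, smul_eq_mul] at hstrict
    omega
  have hmemG : ∀ j v, v ∈ G j ↔ (v ∈ S ∧ v ∈ tri j) := by
    intro j v; rw [hGdef]; simp only [Finset.mem_inter]; rw [hmemF]
  have hno : ∀ j, vB k j ∉ S → vA k j ∈ S ∧ vC k j ∈ S := by
    intro j hbj
    have hsub : G j ⊆ {vA k j, vC k j} := by
      intro v hv
      rw [hmemG] at hv
      obtain ⟨hvS, hvt⟩ := hv
      rw [htri_mem] at hvt
      rcases hvt with h | h | h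
      · simp [h]
      · exact absurd (h ▸ hvS) hbj
      · simp [h]
    have heq : G j = {vA k j, vC k j} := by
      apply Finset.eq_of_subset_of_card_le hsub
      rw [hG2 j]
      exact le_trans (Finset.card_insert_le _ _) (by simp)
    constructor
    · have : vA k j ∈ G j := by rw [heq]; simp
      exact ((hmemG j _).mp this).1
    · have : vC k j ∈ G j := by rw [heq]; simp
      exact ((hmemG j _).mp this).1
  have hpartner : ∀ j, vB k j ∈ S → (vA k j ∈ S ∨ vC k j ∈ S) := by
    intro j hbj
    by_contra hcon
    push_neg at hcon
    have hsub : G j ⊆ {vB k j} := by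
      intro v hv
      rw [hmemG] at hv
      obtain ⟨hvS, hvt⟩ := hv
      rw [htri_mem] at hvt
      rcases hvt with h | h | h
      · exact absurd (h ▸ hvS) hcon.1
      · simp [h]
      · exact absurd (h ▸ hvS) hcon.2
    have hle1 := Finset.card_le_card hsub
    rw [hG2 j, Finset.card_singleton] at hle1
    omega
  -- the number of B-elements of S
  set Bf : Finset (Fin k) := Finset.univ.filter (fun j => vB k j ∈ S) with hBfdef
  set m : ℕ := Bf.card with hmdef
  have hmemBf : ∀ j, j ∈ Bf ↔ vB k j ∈ S := by
    intro j; rw [hBfdef]; simp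
  have hm2 : 2 ≤ m := by
    have himg : S ∩ setB k = ↑(Bf.image (vB k)) := by
      ext v
      simp only [Set.mem_inter_iff, setB, Set.mem_range, Finset.coe_image, Set.mem_image,
        Finset.mem_coe]
      constructor
      · rintro ⟨hvS, j, rfl⟩
        exact ⟨j, (hmemBf j).mpr hvS, rfl⟩
      · rintro ⟨j, hj, rfl⟩
        exact ⟨(hmemBf j).mp hj, j, rfl⟩
    rw [himg, Set.ncard_coe_finset, Finset.card_image_of_injective _ (vB_injective hk1)] at htwo
    exact htwo
  set d : ℝ := 2 * (m:ℝ) - 1 with hddef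
  have hm2R : (2:ℝ) ≤ (m:ℝ) := by exact_mod_cast hm2
  have hd : 0 < d := by rw [hddef]; linarith
  have hdne : d ≠ 0 := ne_of_gt hd
  set lam : V k → ℝ := lamF k S z d D with hlamdef
  -- the "known" pairs
  set pairK : Fin k → Finset (V k) := fun j =>
    if vB k j ∈ S then (if j = z then {vA k z, vB k z} else {vB k j}) else {vA k j, vC k j}
    with hpairdef
  have hpair_tri : ∀ j, pairK j ⊆ tri j := by
    intro j v hv
    simp only [hpairdef] at hv
    by_cases h1 : vB k j ∈ S
    · rw [if_pos h1] at hv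
      by_cases h2 : j = z
      · subst h2
        rw [if_pos rfl] at hv
        simp only [Finset.mem_insert, Finset.mem_singleton] at hv
        rw [htri_mem]; tauto
      · rw [if_neg h2] at hv
        simp only [Finset.mem_singleton] at hv
        rw [htri_mem]; tauto
    · rw [if_neg h1] at hv
      simp only [Finset.mem_insert, Finset.mem_singleton] at hv
      rw [htri_mem]; tauto
  have hpairS : ∀ j, ∀ v ∈ pairK j, v ∈ S := by
    intro j v hv
    simp only [hpairdef] at hv
    by_cases h1 : vB k j ∈ S
    · rw [if_pos h1] at hv
      by_cases h2 : j = z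
      · subst h2
        rw [if_pos rfl] at hv
        simp only [Finset.mem_insert, Finset.mem_singleton] at hv
        rcases hv with rfl | rfl
        · exact hA1'
        · exact hB1'
      · rw [if_neg h2] at hv
        simp only [Finset.mem_singleton] at hv
        rw [hv]; exact h1
    · rw [if_neg h1] at hv
      simp only [Finset.mem_insert, Finset.mem_singleton] at hv
      rcases hv with rfl | rfl
      · exact (hno j h1).1
      · exact (hno j h1).2
  -- the three summation steps
  have hstep1 : ∑ i, lam (r i) • r i = ∑ v ∈ Finset.univ.image r, lam v • v := by
    rw [Finset.sum_image]
    intro x _ y _ h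
    exact hr h
  have hKsub : Finset.univ.biUnion pairK ⊆ Finset.univ.image r := by
    intro v hv
    rw [Finset.mem_biUnion] at hv
    obtain ⟨j, -, hv⟩ := hv
    have hvS : v ∈ S := hpairS j v hv
    rw [← hrange] at hvS
    obtain ⟨i, hi⟩ := hvS
    exact Finset.mem_image.mpr ⟨i, Finset.mem_univ i, hi⟩
  have hzero : ∀ v ∈ Finset.univ.image r, v ∉ Finset.univ.biUnion pairK → lam v • v = 0 := by
    intro v hv hvn
    have hvS : v ∈ S := by
      rw [Finset.mem_image] at hv
      obtain ⟨i, -, hi⟩ := hv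
      rw [← hrange]
      exact hi ▸ Set.mem_range_self i
    have hnot : ∀ j, v ∉ pairK j := fun j hj =>
      hvn (Finset.mem_biUnion.mpr ⟨j, Finset.mem_univ j, hj⟩)
    have hlam0 : lam v = 0 := by
      rcases hSX hvS with (⟨j, rfl⟩ | ⟨j, rfl⟩) | ⟨j, rfl⟩
      · -- v = vA k j
        have hbj : vB k j ∈ S := by
          by_contra hb
          exact hnot j (by simp only [hpairdef]; rw [if_neg hb]; simp)
        have hjz : j ≠ z := by
          intro h
          apply hnot j
          simp only [hpairdef]
          rw [if_pos hbj, if_pos h, h]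
          simp
        rw [hlamdef, lamF_A hk1, if_neg (not_not_intro hbj), if_neg hjz]
        ring
      · -- v = vB k j : impossible
        exfalso
        apply hnot j
        simp only [hpairdef]
        rw [if_pos hvS]
        by_cases h2 : j = z
        · subst h2; rw [if_pos rfl]; simp
        · rw [if_neg h2]; simp
      · -- v = vC k j
        have hbj : vB k j ∈ S := by
          by_contra hb
          exact hnot j (by simp only [hpairdef]; rw [if_neg hb]; simp)
        rw [hlamdef, lamF_C hk1, if_neg (not_not_intro hbj)]
    rw [hlam0, zero_smul]
  have hstep2 : ∑ v ∈ Finset.univ.image r, lam v • v = ∑ v ∈ Finset.univ.biUnion pairK, lam v • v :=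
    (Finset.sum_subset hKsub hzero).symm
  have hstep3 : ∑ v ∈ Finset.univ.biUnion pairK, lam v • v = ∑ j, ∑ v ∈ pairK j, lam v • v :=
    Finset.sum_biUnion (fun j _ j' _ hne => (htri_disj j j' hne).mono (hpair_tri j) (hpair_tri j'))
  -- the key linear-combination identity
  have hC0 : vC k z = ∑ i, lam (r i) • r i := by
    rw [hstep1, hstep2, hstep3]
    funext x
    rw [Finset.sum_apply]
    have hinner : ∀ j : Fin k, (∑ v ∈ pairK j, lam v • v) x
        = ((if vB k j ∈ S then 4 / d else 0)
          - (2 / d) * (if Sum.elim id id x = j then 1 else 0))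
          + (if j = z then ((if Sum.elim id id x = z then (1:ℝ) else 0) - vA k z x - 2) else 0) := by
      intro j
      rw [Finset.sum_apply]
      by_cases h1 : vB k j ∈ S
      · by_cases h2 : j = z
        · subst h2
          simp only [hpairdef]
          rw [if_pos h1]
          simp only [if_true]
          rw [Finset.sum_insert (by simp [vA_ne_vB hk1])]
          rw [Finset.sum_singleton]
          simp only [Pi.smul_apply, smul_eq_mul]
          rw [hlamdef, lamF_A hk1, lamF_B hk1]
          rw [if_neg (not_not_intro h1), if_pos h1]
          simp only [eq_self_iff_true, if_true]
          rw [vB_apply, ← hDdef]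
          generalize (if Sum.elim id id x = z then (1:ℝ) else 0) = e
          field_simp
          ring
        · simp only [hpairdef]
          rw [if_pos h1, if_neg h2, Finset.sum_singleton]
          simp only [Pi.smul_apply, smul_eq_mul]
          rw [hlamdef, lamF_B hk1, if_neg h2, vB_apply, ← hDdef]
          rw [if_pos h1, if_neg h2]
          generalize (if Sum.elim id id x = j then (1:ℝ) else 0) = e
          field_simp
          ring
      · have hjz : j ≠ z := fun h => h1 (h ▸ hB1')
        simp only [hpairdef]
        rw [if_neg h1, Finset.sum_insert (by simp [vA_ne_vC]), Finset.sum_singleton]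
        simp only [Pi.smul_apply, smul_eq_mul]
        rw [hlamdef, lamF_A hk1, lamF_C hk1, if_pos h1, if_neg hjz, if_neg h1, if_neg hjz]
        rw [← vA_add_vC_apply j x]
        ring
    rw [Finset.sum_congr rfl (fun j _ => hinner j)]
    rw [Finset.sum_add_distrib, Finset.sum_sub_distrib]
    rw [← Finset.mul_sum]
    rw [Finset.sum_ite_eq Finset.univ (Sum.elim id id x) (fun _ => (1:ℝ))]
    rw [Finset.sum_ite_eq' Finset.univ z
      (fun _ => ((if Sum.elim id id x = z then (1:ℝ) else 0) - vA k z x - 2))]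
    rw [if_pos (Finset.mem_univ _), if_pos (Finset.mem_univ _)]
    have hsumB : (∑ j, if vB k j ∈ S then (4 / d : ℝ) else 0) = (m:ℝ) * (4 / d) := by
      rw [Finset.sum_ite, Finset.sum_const, Finset.sum_const_zero, add_zero, nsmul_eq_mul]
    rw [hsumB]
    have hvCz : vC k z x = (if Sum.elim id id x = z then (1:ℝ) else 0) - vA k z x := by
      cases x with
      | inl i => simp [vA, vC]; exact (sub_eq_zero.mpr (if_congr Iff.rfl rfl rfl)).symm
      | inr i => simp [vA, vC]; exact if_congr Iff.rfl rfl rfl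
    rw [hvCz]
    have harith : (m:ℝ) * (4 / d) - 2 / d - 2 = 0 := by
      rw [hddef]
      have hinv : (2*(m:ℝ)-1) * (2*(m:ℝ)-1)⁻¹ = 1 := mul_inv_cancel₀ (ne_of_gt (by linarith))
      linear_combination 2 * hinv
    linarith [harith]
  -- the rows of the matrix span the whole space
  have hmem_sp : ∀ v ∈ S, v ∈ Submodule.span ℝ S := fun v hv => Submodule.subset_span hv
  have hu : (fun _ => (1:ℝ) : V k) ∈ Submodule.span ℝ S := by
    have hurep : (fun _ => (1:ℝ) : V k)
        = (∑ j ∈ Bf, (D / d) • vB k j)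
          + ∑ j ∈ Finset.univ \ Bf, (-(1 / d)) • (vA k j + vC k j) := by
      funext x
      rw [Pi.add_apply, Finset.sum_apply, Finset.sum_apply]
      have h1 : ∀ j ∈ Bf, ((D / d) • vB k j) x
          = 2 / d - (1 / d) * (if Sum.elim id id x = j then (1:ℝ) else 0) := by
        intro j _
        rw [Pi.smul_apply, smul_eq_mul, vB_apply, ← hDdef]
        generalize (if Sum.elim id id x = j then (1:ℝ) else 0) = e
        field_simp
      have h2 : ∀ j ∈ Finset.univ \ Bf, ((-(1 / d)) • (vA k j + vC k j)) x
          = (-(1 / d)) * (if Sum.elim id id x = j then (1:ℝ) else 0) := by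
        intro j _
        rw [Pi.smul_apply, Pi.add_apply, smul_eq_mul, vA_add_vC_apply]
      rw [Finset.sum_congr rfl h1, Finset.sum_congr rfl h2]
      rw [Finset.sum_sub_distrib, Finset.sum_const, ← Finset.mul_sum, ← Finset.mul_sum]
      rw [Finset.sum_ite_eq Bf (Sum.elim id id x) (fun _ => (1:ℝ))]
      rw [Finset.sum_ite_eq (Finset.univ \ Bf) (Sum.elim id id x) (fun _ => (1:ℝ))]
      rw [nsmul_eq_mul, ← hmdef]
      by_cases hx : Sum.elim id id x ∈ Bf
      · rw [if_pos hx, if_neg (by simp [hx])]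
        rw [hddef]
        have hinv : (2*(m:ℝ)-1) * (2*(m:ℝ)-1)⁻¹ = 1 := mul_inv_cancel₀ (ne_of_gt (by linarith))
        linear_combination -hinv
      · rw [if_neg hx, if_pos (by simp [hx])]
        rw [hddef]
        have hinv : (2*(m:ℝ)-1) * (2*(m:ℝ)-1)⁻¹ = 1 := mul_inv_cancel₀ (ne_of_gt (by linarith))
        linear_combination -hinv
    rw [hurep]
    refine Submodule.add_mem _
      (Submodule.sum_mem _ fun j hj => Submodule.smul_mem _ _ (hmem_sp _ ((hmemBf j).mp hj)))
      (Submodule.sum_mem _ fun j hj => Submodule.smul_mem _ _ ?_)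
    have hbj : vB k j ∉ S := by
      rw [Finset.mem_sdiff] at hj
      exact fun hc => hj.2 ((hmemBf j).mpr hc)
    exact Submodule.add_mem _ (hmem_sp _ (hno j hbj).1) (hmem_sp _ (hno j hbj).2)
  have hAC_sp : ∀ j : Fin k, vA k j ∈ Submodule.span ℝ S ∧ vC k j ∈ Submodule.span ℝ S := by
    intro j
    by_cases hb : vB k j ∈ S
    · have hsum : vA k j + vC k j ∈ Submodule.span ℝ S := by
        have heq : vA k j + vC k j = (2:ℝ) • (fun _ => (1:ℝ) : V k) - D • vB k j := by
          funext x
          rw [Pi.sub_apply, Pi.smul_apply, Pi.smul_apply, Pi.add_apply, vA_add_vC_apply,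
            smul_eq_mul, smul_eq_mul, vB_apply, ← hDdef]
          generalize (if Sum.elim id id x = j then (1:ℝ) else 0) = e
          field_simp
          ring
        rw [heq]
        exact Submodule.sub_mem _ (Submodule.smul_mem _ _ hu)
          (Submodule.smul_mem _ _ (hmem_sp _ hb))
      rcases hpartner j hb with ha | hc
      · refine ⟨hmem_sp _ ha, ?_⟩
        have hrew : vC k j = (vA k j + vC k j) - vA k j := (add_sub_cancel_left _ _).symm
        rw [hrew]
        exact Submodule.sub_mem _ hsum (hmem_sp _ ha)
      · refine ⟨?_, hmem_sp _ hc⟩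
        have hrew : vA k j = (vA k j + vC k j) - vC k j := (add_sub_cancel_right _ _).symm
        rw [hrew]
        exact Submodule.sub_mem _ hsum (hmem_sp _ hc)
    · exact ⟨hmem_sp _ (hno j hb).1, hmem_sp _ (hno j hb).2⟩
  have htop : ⊤ ≤ Submodule.span ℝ (Set.range r) := by
    rw [hrange]
    intro v _
    rw [pi_eq_sum_univ v]
    refine Submodule.sum_mem _ fun x _ => Submodule.smul_mem _ _ ?_
    cases x with
    | inl i =>
      have hbasis : (fun y => if (Sum.inl i : Fin k ⊕ Fin k) = y then (1:ℝ) else 0) = vA k i := by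
        funext y
        cases y with
        | inl i' =>
          simp only [vA]
          by_cases h : i = i'
          · subst h; rw [if_pos rfl, if_pos rfl]
          · rw [if_neg (by simp [h]), if_neg (fun hh => h hh.symm)]
        | inr i' =>
          simp only [vA]
          rw [if_neg (by simp)]
      rw [hbasis]
      exact (hAC_sp i).1
    | inr i =>
      have hbasis : (fun y => if (Sum.inr i : Fin k ⊕ Fin k) = y then (1:ℝ) else 0) = vC k i := by
        funext y
        cases y with
        | inl i' =>
          simp only [vC]
          rw [if_neg (by simp)]
        | inr i' =>
          simp only [vC]
          by_cases h : i = i'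
          · subst h; rw [if_pos rfl, if_pos rfl]
          · rw [if_neg (by simp [h]), if_neg (fun hh => h hh.symm)]
      rw [hbasis]
      exact (hAC_sp i).2
  have hLI : LinearIndependent ℝ r :=
    linearIndependent_of_top_le_span_of_card_eq_finrank htop (by simp [Module.finrank_pi])
  have hdet_ne : (Matrix.of fun i j => r i j).det ≠ 0 := by
    intro h0
    obtain ⟨v, hv0, hvM⟩ := Matrix.exists_vecMul_eq_zero_iff.mpr h0
    apply hv0
    have hcomb : ∑ i, v i • r i = 0 := by
      funext y
      have hy := congrFun hvM y
      simp only [Matrix.vecMul, dotProduct, Matrix.of_apply, Pi.zero_apply] at hy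
      rw [Finset.sum_apply]
      simpa [Pi.smul_apply, smul_eq_mul] using hy
    have hall := Fintype.linearIndependent_iff.mp hLI v hcomb
    funext i
    exact hall i
  have hupd : (Matrix.of fun i j => Function.update r i₀ (vC k z) i j)
      = (Matrix.of fun i j => r i j).updateRow i₀ (vC k z) := by
    ext i y
    rw [Matrix.updateRow_apply]
    by_cases h : i = i₀
    · subst h; simp [Function.update_apply]
    · simp [Function.update_apply, h]
  have hdetC : ((Matrix.of fun i j => r i j).updateRow i₀ (vC k z)).det
      = lam (vB k z) * (Matrix.of fun i j => r i j).det := by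
    have h2 : ((Matrix.of fun i j => r i j).updateRow i₀ (∑ i, lam (r i) • r i)).det
        = lam (r i₀) • (Matrix.of fun i j => r i j).det :=
      Matrix.det_updateRow_sum _ i₀ (fun i => lam (r i))
    rw [← hC0] at h2
    rw [h2, hi₀', smul_eq_mul]
  have hlamval : lam (vB k z) = 2 * D / d - D := by
    rw [hlamdef, lamF_B hk1, if_pos rfl]
  have h2d : (2:ℝ) < d := by rw [hddef]; linarith
  have hlamneg : 2 * D / d - D < 0 := by
    rw [sub_neg, div_lt_iff₀ hd]
    nlinarith
  rw [hupd, hdetC, hlamval]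
  have hsq : 0 < (Matrix.of fun i j => r i j).det * (Matrix.of fun i j => r i j).det :=
    mul_self_pos.mpr hdet_ne
  nlinarith
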